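/- Let θ₁, θ₂ ∈ [0,1) be such that the forward orbits O(θ₁) and O(θ₂) under the doubling map D are different sets, and such that for each i ∈ {1,2}, either O(θᵢ) is an infinite set or θᵢ is a periodic point of D of minimal period at least 3. Then the two orbits are mixed: there exist real numbers x₁ < x₂ < x₃ < x₄ in [0,1) such that either (x₁ ∈ O(θ₁), x₃ ∈ O(θ₁), x₂ ∈ O(θ₂) and x₄ ∈ O(θ₂)) or (x₁ ∈ O(θ₂), x₃ ∈ O(θ₂), x₂ ∈ O(θ₁) and x₄ ∈ O(θ₁)). -/

import Mathlib

/-- The doubling map on `[0,1)`: `x ↦ Int.fract (2 * x)`. -/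
noncomputable def doubling (x : ℝ) : ℝ := Int.fract (2 * x)

/-- The forward orbit of `θ` under the doubling map. -/
noncomputable def orbitD (θ : ℝ) : Set ℝ := Set.range fun n : ℕ => doubling^[n] θ

lemma doubling_mem_Ico (x : ℝ) : doubling x ∈ Set.Ico (0:ℝ) 1 :=
  ⟨Int.fract_nonneg _, Int.fract_lt_one _⟩

lemma mem_orbit_self (θ : ℝ) : θ ∈ orbitD θ := ⟨0, rfl⟩

lemma orbit_subset {θ : ℝ} (hθ : θ ∈ Set.Ico (0:ℝ) 1) : orbitD θ ⊆ Set.Ico (0:ℝ) 1 := by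
  rintro x ⟨n, rfl⟩
  cases n with
  | zero => simpa using hθ
  | succ n =>
    show doubling^[n+1] θ ∈ _
    rw [Function.iterate_succ_apply']; exact doubling_mem_Ico _

lemma orbit_inv {θ x : ℝ} (hx : x ∈ orbitD θ) : doubling x ∈ orbitD θ := by
  obtain ⟨n, rfl⟩ := hx
  exact ⟨n + 1, Function.iterate_succ_apply' _ _ _⟩

lemma doubling_lower {x : ℝ} (h0 : 0 ≤ x) (h : x < 1/2) : doubling x = 2 * x := by
  unfold doubling
  exact Int.fract_eq_self.mpr ⟨by linarith, by linarith⟩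

lemma doubling_upper {x : ℝ} (h0 : 1/2 ≤ x) (h : x < 1) : doubling x = 2 * x - 1 := by
  unfold doubling
  have h1 : Int.fract (2 * x - (1:ℤ)) = 2 * x - 1 := by
    rw [Int.fract_eq_self.mpr ⟨by push_cast; linarith, by push_cast; linarith⟩]
    push_cast; ring
  rw [← Int.fract_sub_intCast (2 * x) 1, h1]

lemma doubling_zero : doubling 0 = 0 := by simp [doubling]

lemma tail_subset {θ : ℝ} (m : ℕ) : orbitD (doubling^[m] θ) ⊆ orbitD θ := by
  rintro x ⟨n, rfl⟩
  exact ⟨n + m, by show doubling^[n+m] θ = _; rw [Function.iterate_add_apply]⟩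

lemma zero_not_mem {θ : ℝ} (hθ : θ ∈ Set.Ico (0:ℝ) 1)
    (hc : (orbitD θ).Infinite ∨
      (θ ∈ Function.periodicPts doubling ∧ 3 ≤ Function.minimalPeriod doubling θ)) :
    (0:ℝ) ∉ orbitD θ := by
  rintro ⟨m, hm⟩
  simp only at hm
  have htail : ∀ j : ℕ, doubling^[j + m] θ = 0 := by
    intro j
    rw [Function.iterate_add_apply, hm, Function.iterate_fixed doubling_zero]
  rcases hc with hinf | ⟨hper, hmin⟩
  · apply hinf
    have hsub : orbitD θ ⊆ (fun i => doubling^[i] θ) '' Set.Iic m := by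
      rintro x ⟨n, rfl⟩
      rcases le_or_gt n m with h | h
      · exact ⟨n, h, rfl⟩
      · refine ⟨m, le_refl m, ?_⟩
        show doubling^[m] θ = doubling^[n] θ
        have h2 := htail (n - m)
        rw [Nat.sub_add_cancel h.le] at h2
        rw [hm, h2]
    exact Set.Finite.subset ((Set.finite_Iic m).image _) hsub
  · have hk := Function.isPeriodicPt_minimalPeriod doubling θ
    have hkpos : 0 < Function.minimalPeriod doubling θ := by omega
    have hmul : Function.IsPeriodicPt doubling (Function.minimalPeriod doubling θ * (m+1)) θ :=
      hk.mul_const (m+1)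
    have hbig : m ≤ Function.minimalPeriod doubling θ * (m+1) := by
      calc m ≤ 1 * (m+1) := by omega
      _ ≤ Function.minimalPeriod doubling θ * (m+1) := Nat.mul_le_mul_right _ hkpos
    have hθ0 : θ = 0 := by
      have h2 := htail (Function.minimalPeriod doubling θ * (m+1) - m)
      rw [Nat.sub_add_cancel hbig] at h2
      rw [← hmul.eq, h2]
    have h1 : Function.IsPeriodicPt doubling 1 θ := by
      rw [hθ0]
      simpa [Function.IsPeriodicPt, Function.IsFixedPt] using doubling_zero
    have := h1.minimalPeriod_le one_pos
    omega

lemma exists_lt_half {θ : ℝ} (hθ : θ ∈ Set.Ico (0:ℝ) 1) :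
    ∃ b ∈ orbitD θ, b < 1/2 := by
  by_contra hcon
  push_neg at hcon
  have key : ∀ n : ℕ, 1 - doubling^[n] θ = 2 ^ n * (1 - θ) := by
    intro n
    induction n with
    | zero => simp
    | succ n ih =>
      have hmem : doubling^[n] θ ∈ orbitD θ := ⟨n, rfl⟩
      have hh1 : 1/2 ≤ doubling^[n] θ := hcon _ hmem
      have hh2 : doubling^[n] θ < 1 := (orbit_subset hθ hmem).2
      rw [Function.iterate_succ_apply', doubling_upper hh1 hh2]
      rw [pow_succ]
      linarith [ih]
  have hθ1 : (0:ℝ) < 1 - θ := by linarith [hθ.2]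
  obtain ⟨n, hn⟩ := pow_unbounded_of_one_lt ((1:ℝ)/(1-θ)) one_lt_two
  have hh1 : 1/2 ≤ doubling^[n] θ := hcon _ ⟨n, rfl⟩
  have hk := key n
  have hgt : (1:ℝ) < 2 ^ n * (1 - θ) := by
    rw [div_lt_iff₀ hθ1] at hn
    linarith
  linarith

lemma exists_ge_half {θ : ℝ} (hθ : θ ∈ Set.Ico (0:ℝ) 1) (h0 : (0:ℝ) ∉ orbitD θ) :
    ∃ b ∈ orbitD θ, 1/2 ≤ b := by
  by_contra hcon
  push_neg at hcon
  have key : ∀ n : ℕ, doubling^[n] θ = 2 ^ n * θ := by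
    intro n
    induction n with
    | zero => simp
    | succ n ih =>
      have hmem : doubling^[n] θ ∈ orbitD θ := ⟨n, rfl⟩
      have hh1 : doubling^[n] θ < 1/2 := hcon _ hmem
      have hh2 : 0 ≤ doubling^[n] θ := (orbit_subset hθ hmem).1
      rw [Function.iterate_succ_apply', doubling_lower hh2 hh1, ih, pow_succ]
      ring
  have hθpos : 0 < θ := by
    rcases eq_or_lt_of_le hθ.1 with h | h
    · exact absurd (h ▸ mem_orbit_self θ) h0
    · exact h
  obtain ⟨n, hn⟩ := pow_unbounded_of_one_lt ((1:ℝ)/(2*θ)) one_lt_two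
  have hh1 : doubling^[n] θ < 1/2 := hcon _ ⟨n, rfl⟩
  rw [key n] at hh1
  rw [div_lt_iff₀ (by linarith)] at hn
  nlinarith

lemma orbit_eq_of_periodic {θ : ℝ} (hper : θ ∈ Function.periodicPts doubling) (m : ℕ) :
    orbitD θ = orbitD (doubling^[m] θ) := by
  apply Set.Subset.antisymm
  · rintro x ⟨n, rfl⟩
    have hk := Function.isPeriodicPt_minimalPeriod doubling θ
    have hkpos := Function.minimalPeriod_pos_of_mem_periodicPts hper
    refine ⟨n + m * (Function.minimalPeriod doubling θ - 1), ?_⟩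
    show doubling^[n + m * (Function.minimalPeriod doubling θ - 1)] (doubling^[m] θ)
        = doubling^[n] θ
    rw [← Function.iterate_add_apply]
    have harith : n + m * (Function.minimalPeriod doubling θ - 1) + m
        = n + m * Function.minimalPeriod doubling θ := by
      have : m * (Function.minimalPeriod doubling θ - 1) + m
          = m * Function.minimalPeriod doubling θ := by
        have hk1 : Function.minimalPeriod doubling θ - 1 + 1
            = Function.minimalPeriod doubling θ := Nat.succ_pred_eq_of_pos hkpos
        calc m * (Function.minimalPeriod doubling θ - 1) + m
            = m * (Function.minimalPeriod doubling θ - 1 + 1) := by ring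
        _ = m * Function.minimalPeriod doubling θ := by rw [hk1]
      omega
    rw [harith, Function.iterate_add_apply, (hk.const_mul m).eq]
  · rintro x ⟨n, rfl⟩
    exact ⟨n + m, by show doubling^[n+m] θ = _; rw [Function.iterate_add_apply]⟩

lemma tail_infinite {θ : ℝ} (h : (orbitD θ).Infinite) (m : ℕ) :
    (orbitD (doubling^[m] θ)).Infinite := by
  have hsub : orbitD θ \ ((fun i => doubling^[i] θ) '' Set.Iio m) ⊆ orbitD (doubling^[m] θ) := by
    rintro x ⟨⟨n, rfl⟩, hx⟩
    rcases lt_or_ge n m with h' | h'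
    · exact absurd ⟨n, h', rfl⟩ hx
    · refine ⟨n - m, ?_⟩
      show doubling^[n-m] (doubling^[m] θ) = doubling^[n] θ
      rw [← Function.iterate_add_apply]
      congr 1
      omega
  exact Set.Infinite.mono hsub ((h.diff ((Set.finite_Iio m).image _)))

lemma four_lt {S : Set ℝ} (hS : S.Infinite) :
    ∃ x₁ x₂ x₃ x₄, x₁ ∈ S ∧ x₂ ∈ S ∧ x₃ ∈ S ∧ x₄ ∈ S ∧ x₁ < x₂ ∧ x₂ < x₃ ∧ x₃ < x₄ := by
  obtain ⟨t, hts, htc⟩ := hS.exists_subset_card_eq 4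
  have hsort : List.Pairwise (· < ·) (Finset.sort t (· ≤ ·)) := List.sortedLT_iff_pairwise.mp (Finset.sortedLT_sort t)
  have hlen : (Finset.sort t (· ≤ ·)).length = 4 := by rw [Finset.length_sort, htc]
  have hmem : ∀ x ∈ Finset.sort t (· ≤ ·), x ∈ S := by
    intro x hx
    exact hts ((Finset.mem_sort _).1 hx)
  rcases hl : Finset.sort t (· ≤ ·) with _ | ⟨a, _ | ⟨b, _ | ⟨c, _ | ⟨d, _ | ⟨e, rest⟩⟩⟩⟩⟩
  · rw [hl] at hlen; simp at hlen
  · rw [hl] at hlen; simp at hlen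
  · rw [hl] at hlen; simp at hlen
  · rw [hl] at hlen; simp at hlen
  · rw [hl] at hsort
    refine ⟨a, b, c, d, hmem a (by rw [hl]; simp), hmem b (by rw [hl]; simp),
      hmem c (by rw [hl]; simp), hmem d (by rw [hl]; simp), ?_, ?_, ?_⟩ <;>
      · simp [List.pairwise_cons] at hsort; tauto
  · rw [hl] at hlen; simp at hlen
lemma no_gap (A B : Set ℝ)
    (hA : A ⊆ Set.Ico (0:ℝ) 1) (hB : B ⊆ Set.Ico (0:ℝ) 1)
    (hAinv : ∀ x ∈ A, doubling x ∈ A) (hBinv : ∀ x ∈ B, doubling x ∈ B)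
    (hdisj : ∀ x, x ∈ A → x ∈ B → False)
    (hA0 : (0:ℝ) ∉ A)
    (haL : ∃ a ∈ A, a < 1/2)
    (hbL : ∃ b ∈ B, b < 1/2) (hbR : ∃ b ∈ B, 1/2 ≤ b)
    (H : ∀ a ∈ A, ∀ b ∈ B, ∀ b' ∈ B, ¬(b < a ∧ a < b')) : False := by
  obtain ⟨a₀, ha₀A, ha₀⟩ := haL
  obtain ⟨bm, hbmB, hbm⟩ := hbL
  obtain ⟨bp, hbpB, hbp⟩ := hbR
  have hsplit : ∀ a ∈ A, (∀ b ∈ B, a < b) ∨ (∀ b ∈ B, b < a) := by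
    intro a ha
    by_cases h : ∃ b ∈ B, b ≤ a
    · right
      obtain ⟨b₀, hb₀B, hb₀⟩ := h
      intro b hb
      rcases lt_or_ge b a with h' | h'
      · exact h'
      · exfalso
        have hba : b ≠ a := fun e => hdisj a ha (e ▸ hb)
        have hb₀a : b₀ ≠ a := fun e => hdisj a ha (e ▸ hb₀B)
        exact H a ha b₀ hb₀B b hb
          ⟨lt_of_le_of_ne hb₀ hb₀a, lt_of_le_of_ne h' (Ne.symm hba)⟩
    · left
      push_neg at h
      exact h
  have hALne : a₀ ∈ {a | a ∈ A ∧ ∀ b ∈ B, a < b} := by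
    refine ⟨ha₀A, ?_⟩
    rcases hsplit a₀ ha₀A with h | h
    · exact h
    · exact absurd (h bp hbpB) (by linarith)
  set AL := {a | a ∈ A ∧ ∀ b ∈ B, a < b} with hALdef
  have hALbdd : BddAbove AL := ⟨bm, fun a ha => (ha.2 bm hbmB).le⟩
  set u := sSup AL with hudef
  have hu_le_b : ∀ b ∈ B, u ≤ b := fun b hb =>
    csSup_le ⟨a₀, hALne⟩ (fun a ha => (ha.2 b hb).le)
  have hu_lt_half : u < 1/2 := lt_of_le_of_lt (hu_le_b bm hbmB) hbm
  have ha₀u : a₀ ≤ u := le_csSup hALbdd hALne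
  have hu_pos : 0 < u := by
    rcases lt_or_eq_of_le (hA ha₀A).1 with h | h
    · linarith
    · exact absurd (h ▸ ha₀A) hA0
  set V := insert (1:ℝ) {a | a ∈ A ∧ ∀ b ∈ B, b < a} with hVdef
  set v := sInf V with hvdef
  have hVne : V.Nonempty := ⟨1, Set.mem_insert _ _⟩
  have hVbdd : BddBelow V := by
    refine ⟨0, ?_⟩
    rintro x (rfl | ⟨hxA, _⟩)
    · norm_num
    · exact (hA hxA).1
  have hb_le_v : ∀ b ∈ B, b ≤ v := by
    intro b hb
    refine le_csInf hVne ?_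
    rintro x (rfl | ⟨hxA, hbx⟩)
    · exact (hB hb).2.le
    · exact (hbx b hb).le
  have hgap : ∀ a ∈ A, ¬(u < a ∧ a < v) := by
    rintro a ha ⟨hh1, hh2⟩
    rcases hsplit a ha with h | h
    · exact absurd (le_csSup hALbdd ⟨ha, h⟩) (not_le.mpr hh1)
    · exact absurd (csInf_le hVbdd (Set.mem_insert_of_mem _ ⟨ha, h⟩)) (not_le.mpr hh2)
  have h2bm : 2 * bm ∈ B := by
    rw [← doubling_lower (hB hbmB).1 hbm]
    exact hBinv bm hbmB
  have h2bmv := hb_le_v _ h2bm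
  by_cases huA : u ∈ A
  · have h2uA : 2 * u ∈ A := by
      rw [← doubling_lower hu_pos.le hu_lt_half]
      exact hAinv u huA
    have hv2u : v ≤ 2 * u := by
      by_contra hcon
      push_neg at hcon
      exact hgap _ h2uA ⟨by linarith, hcon⟩
    have hbmu : u < bm := lt_of_le_of_ne (hu_le_b bm hbmB) (fun e => hdisj u huA (e ▸ hbmB))
    linarith
  · obtain ⟨a, haAL, hau⟩ := exists_lt_of_lt_csSup ⟨a₀, hALne⟩
      (show u/2 < u by linarith)
    have ha_lt : a < u := lt_of_le_of_ne (le_csSup hALbdd haAL) (fun e => huA (e ▸ haAL.1))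
    have h2aA : 2 * a ∈ A := by
      rw [← doubling_lower (hA haAL.1).1 (by linarith)]
      exact hAinv a haAL.1
    have hv2a : v ≤ 2 * a := by
      by_contra hcon
      push_neg at hcon
      exact hgap _ h2aA ⟨by linarith, hcon⟩
    have hbmu : u ≤ bm := hu_le_b bm hbmB
    linarith

theorem stmt_3 (θ₁ θ₂ : ℝ)
    (h₁ : θ₁ ∈ Set.Ico (0:ℝ) 1) (h₂ : θ₂ ∈ Set.Ico (0:ℝ) 1)
    (hne : orbitD θ₁ ≠ orbitD θ₂)
    (hcond : ∀ θ ∈ ({θ₁, θ₂} : Set ℝ),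
      (orbitD θ).Infinite ∨
        (θ ∈ Function.periodicPts doubling ∧ 3 ≤ Function.minimalPeriod doubling θ)) :
    ∃ x₁ x₂ x₃ x₄ : ℝ,
      x₁ < x₂ ∧ x₂ < x₃ ∧ x₃ < x₄ ∧
      x₁ ∈ Set.Ico (0:ℝ) 1 ∧ x₂ ∈ Set.Ico (0:ℝ) 1 ∧
      x₃ ∈ Set.Ico (0:ℝ) 1 ∧ x₄ ∈ Set.Ico (0:ℝ) 1 ∧
      ((x₁ ∈ orbitD θ₁ ∧ x₃ ∈ orbitD θ₁ ∧ x₂ ∈ orbitD θ₂ ∧ x₄ ∈ orbitD θ₂) ∨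
       (x₁ ∈ orbitD θ₂ ∧ x₃ ∈ orbitD θ₂ ∧ x₂ ∈ orbitD θ₁ ∧ x₄ ∈ orbitD θ₁)) := by
  by_contra hq
  have hA1 := orbit_subset h₁
  have hB1 := orbit_subset h₂
  have hc1 := hcond θ₁ (by simp)
  have hc2 := hcond θ₂ (by simp)
  have h01 := zero_not_mem h₁ hc1
  have h02 := zero_not_mem h₂ hc2
  by_cases hAB : (orbitD θ₁ ∩ orbitD θ₂).Nonempty
  · obtain ⟨τ, hτ1, hτ2⟩ := hAB
    obtain ⟨m, hm⟩ := hτ1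
    obtain ⟨l, hl⟩ := hτ2
    simp only at hm hl
    have hsub1 : orbitD τ ⊆ orbitD θ₁ := hm ▸ tail_subset m
    have hsub2 : orbitD τ ⊆ orbitD θ₂ := hl ▸ tail_subset l
    have hfin : (orbitD τ).Infinite → False := by
      intro hinf
      obtain ⟨x₁, x₂, x₃, x₄, m1, m2, m3, m4, o12, o23, o34⟩ := four_lt hinf
      exact hq ⟨x₁, x₂, x₃, x₄, o12, o23, o34,
        hA1 (hsub1 m1), hA1 (hsub1 m2), hA1 (hsub1 m3), hA1 (hsub1 m4),
        Or.inl ⟨hsub1 m1, hsub1 m3, hsub2 m2, hsub2 m4⟩⟩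
    rcases hc1 with hinf1 | ⟨hper1, _⟩
    · exact hfin (hm ▸ tail_infinite hinf1 m)
    · rcases hc2 with hinf2 | ⟨hper2, _⟩
      · exact hfin (hl ▸ tail_infinite hinf2 l)
      · apply hne
        calc orbitD θ₁ = orbitD (doubling^[m] θ₁) := orbit_eq_of_periodic hper1 m
        _ = orbitD τ := by rw [hm]
        _ = orbitD (doubling^[l] θ₂) := by rw [hl]
        _ = orbitD θ₂ := (orbit_eq_of_periodic hper2 l).symm
  · have hdisj : ∀ x, x ∈ orbitD θ₁ → x ∈ orbitD θ₂ → False :=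
      fun x hx1 hx2 => hAB ⟨x, hx1, hx2⟩
    obtain ⟨a₁, ha₁, ha₁'⟩ := exists_lt_half h₁
    obtain ⟨b₁, hb₁, hb₁'⟩ := exists_lt_half h₂
    obtain ⟨a₂, ha₂, ha₂'⟩ := exists_ge_half h₁ h01
    obtain ⟨b₂, hb₂, hb₂'⟩ := exists_ge_half h₂ h02
    by_cases hH : ∀ a ∈ orbitD θ₁, ∀ b ∈ orbitD θ₂, ∀ b' ∈ orbitD θ₂, ¬(b < a ∧ a < b')
    · exact no_gap _ _ hA1 hB1 (fun x hx => orbit_inv hx) (fun x hx => orbit_inv hx)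
        hdisj h01 ⟨a₁, ha₁, ha₁'⟩ ⟨b₁, hb₁, hb₁'⟩ ⟨b₂, hb₂, hb₂'⟩ hH
    · by_cases hH' : ∀ b ∈ orbitD θ₂, ∀ a ∈ orbitD θ₁, ∀ a' ∈ orbitD θ₁, ¬(a < b ∧ b < a')
      · exact no_gap _ _ hB1 hA1 (fun x hx => orbit_inv hx) (fun x hx => orbit_inv hx)
          (fun x hx2 hx1 => hdisj x hx1 hx2) h02 ⟨b₁, hb₁, hb₁'⟩ ⟨a₁, ha₁, ha₁'⟩
          ⟨a₂, ha₂, ha₂'⟩ hH'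
      · push_neg at hH hH'
        obtain ⟨a, haA, blo, hbloB, bhi, hbhiB, hlt1, hlt2⟩ := hH
        obtain ⟨b, hbB, alo, haloA, ahi, hahiA, hlt3, hlt4⟩ := hH'
        have hab : a ≠ b := fun e => hdisj a haA (e ▸ hbB)
        rcases hab.lt_or_gt with hlt | hlt
        · exact hq ⟨blo, a, b, ahi, hlt1, hlt, hlt4, hB1 hbloB, hA1 haA, hB1 hbB, hA1 hahiA,
            Or.inr ⟨hbloB, hbB, haA, hahiA⟩⟩
        · exact hq ⟨alo, b, a, bhi, hlt3, hlt, hlt2, hA1 haloA, hB1 hbB, hA1 haA, hB1 hbhiB,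
            Or.inl ⟨haloA, haA, hbB, hbhiB⟩⟩
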